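/- Let E be a real Banach space, and Q, R : E → E continuous linear maps with Q ∘ Q = 0. Set D := Q ∘ R + R ∘ Q. Assume: (i) exp(s • D) converges in operator norm to some continuous linear map P as s → ∞, and (ii) the operator-valued improper integral H := ∫_0^∞ exp(s • D) ∘ R ds converges (as a Bochner integral in the space of continuous linear maps). Then P - id = Q ∘ H + H ∘ Q. -/

import Mathlib

open Filter MeasureTheory

set_option maxHeartbeats 800000
set_option synthInstance.maxHeartbeats 200000

/-- Abstract homotopy formula: if `Q ∘ Q = 0`, `D := Q ∘ R + R ∘ Q`,
`exp (s • D) → P` in operator norm as `s → ∞`, and the operator-valued improper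
integral `H := ∫_0^∞ exp (s • D) ∘ R ds` converges, then
`P - id = Q ∘ H + H ∘ Q`. -/
theorem homotopy_formula
    (E : Type*) [NormedAddCommGroup E] [NormedSpace ℝ E] [CompleteSpace E]
    (Q R : E →L[ℝ] E) (hQ : Q.comp Q = 0)
    (D : E →L[ℝ] E) (hDdef : D = Q.comp R + R.comp Q)
    (P : E →L[ℝ] E)
    (hP : Tendsto (fun s : ℝ => NormedSpace.exp (s • D)) atTop (nhds P))
    (hInt : IntegrableOn (fun s : ℝ => (NormedSpace.exp (s • D)).comp R)
      (Set.Ioi (0 : ℝ)))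
    (H : E →L[ℝ] E)
    (hH : H = ∫ s in Set.Ioi (0 : ℝ), (NormedSpace.exp (s • D)).comp R) :
    P - ContinuousLinearMap.id ℝ E = Q.comp H + H.comp Q := by
  have hQQ : Q * Q = 0 := hQ
  have hDmul : D = Q * R + R * Q := hDdef
  have hQD : Commute Q D := by
    unfold Commute SemiconjBy
    rw [hDmul, mul_add, add_mul, ← mul_assoc, ← mul_assoc, hQQ, zero_mul,
      mul_assoc, mul_assoc, hQQ, mul_zero, zero_add, add_zero]
  set g : ℝ → (E →L[ℝ] E) := fun s => (NormedSpace.exp (s • D)).comp R with hg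
  have key : ∀ s : ℝ,
      NormedSpace.exp (s • D) * D = Q * g s + g s * Q := by
    intro s
    have hc : NormedSpace.exp (s • D) * Q = Q * NormedSpace.exp (s • D) :=
      (((hQD.smul_right s).symm).exp_left).eq
    have hgs : g s = NormedSpace.exp (s • D) * R := rfl
    calc NormedSpace.exp (s • D) * D
        = NormedSpace.exp (s • D) * Q * R
          + NormedSpace.exp (s • D) * R * Q := by
          rw [mul_assoc, mul_assoc, ← mul_add, ← hDmul]
      _ = Q * g s + g s * Q := by rw [hc, hgs, mul_assoc]
  -- integrability
  have h1 : IntegrableOn (fun s : ℝ => Q * g s) (Set.Ioi (0 : ℝ)) :=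
    (ContinuousLinearMap.mul ℝ (E →L[ℝ] E) Q).integrable_comp hInt
  have h2 : IntegrableOn (fun s : ℝ => g s * Q) (Set.Ioi (0 : ℝ)) :=
    ((ContinuousLinearMap.mul ℝ (E →L[ℝ] E)).flip Q).integrable_comp hInt
  have hDer : IntegrableOn (fun s : ℝ => NormedSpace.exp (s • D) * D)
      (Set.Ioi (0 : ℝ)) :=
    MeasureTheory.IntegrableOn.congr_fun (IntegrableOn.fun_add (ε' := E →L[ℝ] E) h1 h2)
      (fun s _ => (key s).symm) measurableSet_Ioi
  have hQH : Q.comp H = ∫ s in Set.Ioi (0 : ℝ), Q * g s := by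
    rw [hH]
    exact ((ContinuousLinearMap.mul ℝ (E →L[ℝ] E) Q).integral_comp_comm hInt).symm
  have hHQ : H.comp Q = ∫ s in Set.Ioi (0 : ℝ), g s * Q := by
    rw [hH]
    exact (((ContinuousLinearMap.mul ℝ (E →L[ℝ] E)).flip Q).integral_comp_comm
      hInt).symm
  have hsum : Q.comp H + H.comp Q
      = ∫ s in Set.Ioi (0 : ℝ), NormedSpace.exp (s • D) * D := by
    rw [hQH, hHQ, ← integral_add h1 h2]
    exact integral_congr_ae (Filter.Eventually.of_forall fun s => (key s).symm)
  -- FTC on [0, t]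
  have hcont : Continuous fun s : ℝ => NormedSpace.exp (s • D) * D :=
    ((continuous_iff_continuousAt.2 fun x => (NormedSpace.exp_analytic (𝕂 := ℝ) x).continuousAt).comp (continuous_id.smul continuous_const)).mul
      continuous_const
  have hFTC : ∀ t : ℝ, (∫ s in (0:ℝ)..t, NormedSpace.exp (s • D) * D)
      = NormedSpace.exp (t • D) - 1 := by
    intro t
    have := intervalIntegral.integral_eq_sub_of_hasDerivAt
      (f := fun u : ℝ => NormedSpace.exp (u • D))
      (f' := fun u : ℝ => NormedSpace.exp (u • D) * D)
      (fun u _ => hasDerivAt_exp_smul_const D u)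
      (hcont.intervalIntegrable 0 t)
    rw [this]
    simp [NormedSpace.exp_zero]
  have hlim1 : Tendsto (fun t : ℝ => ∫ s in (0:ℝ)..t, NormedSpace.exp (s • D) * D)
      atTop (nhds (∫ s in Set.Ioi (0:ℝ), NormedSpace.exp (s • D) * D)) :=
    intervalIntegral_tendsto_integral_Ioi 0 hDer tendsto_id
  have hlim2 : Tendsto (fun t : ℝ => ∫ s in (0:ℝ)..t, NormedSpace.exp (s • D) * D)
      atTop (nhds (P - 1)) := by
    simp only [hFTC]
    exact hP.sub tendsto_const_nhds
  have hfin : (∫ s in Set.Ioi (0:ℝ), NormedSpace.exp (s • D) * D) = P - 1 :=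
    tendsto_nhds_unique hlim1 hlim2
  rw [hsum, hfin]
  rfl
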